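/- Let h ≥ 2 and let F be the free group of rank h. If elements g₁, g₂, …, g_h ∈ F generate F (the subgroup generated by {g₁, …, g_h} is all of F), then the commutator ⁅g₁, g₂⁆ does not lie in the third term [[F,F],F] of the lower central series of F; equivalently, the image of ⁅g₁, g₂⁆ in [F,F]/[[F,F],F] is nontrivial. (This is the final step in the proof of Lemma 3.2 of the paper: for a surjection φ onto F_h with φ(a₁), …, φ(a_h) generating F_h, one has φ([a₁,a₂]) ≠ 1 in F_h¹/F_h².) -/

import Mathlib

open scoped commutatorElement

/-- The discrete Heisenberg group. -/
@[ext]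
structure Heis where
  a : ℤ
  b : ℤ
  c : ℤ

namespace Heis

instance : Mul Heis := ⟨fun x y => ⟨x.a + y.a, x.b + y.b, x.c + y.c + x.a * y.b⟩⟩
instance : One Heis := ⟨⟨0, 0, 0⟩⟩
instance : Inv Heis := ⟨fun x => ⟨-x.a, -x.b, -x.c + x.a * x.b⟩⟩

@[simp] lemma mul_a (x y : Heis) : (x * y).a = x.a + y.a := rfl
@[simp] lemma mul_b (x y : Heis) : (x * y).b = x.b + y.b := rfl
@[simp] lemma mul_c (x y : Heis) : (x * y).c = x.c + y.c + x.a * y.b := rfl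
@[simp] lemma one_a : (1 : Heis).a = 0 := rfl
@[simp] lemma one_b : (1 : Heis).b = 0 := rfl
@[simp] lemma one_c : (1 : Heis).c = 0 := rfl
@[simp] lemma inv_a (x : Heis) : (x⁻¹).a = -x.a := rfl
@[simp] lemma inv_b (x : Heis) : (x⁻¹).b = -x.b := rfl
@[simp] lemma inv_c (x : Heis) : (x⁻¹).c = -x.c + x.a * x.b := rfl

instance : Group Heis where
  mul_assoc x y z := by ext <;> simp <;> try ring
  one_mul x := by ext <;> simp
  mul_one x := by ext <;> simp
  inv_mul_cancel x := by ext <;> simp <;> try ring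

lemma commutator_a (x y : Heis) : (⁅x, y⁆).a = 0 := by
  simp [commutatorElement_def]; try ring
lemma commutator_b (x y : Heis) : (⁅x, y⁆).b = 0 := by
  simp [commutatorElement_def]; try ring
lemma commutator_c (x y : Heis) : (⁅x, y⁆).c = x.a * y.b - y.a * x.b := by
  simp [commutatorElement_def]; ring

/-- The central subgroup `{(0,0,c)}`. -/
def K : Subgroup Heis where
  carrier := {x | x.a = 0 ∧ x.b = 0}
  one_mem' := ⟨rfl, rfl⟩
  mul_mem' := by rintro x y ⟨hx1, hx2⟩ ⟨hy1, hy2⟩; exact ⟨by simp [hx1, hy1], by simp [hx2, hy2]⟩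
  inv_mem' := by rintro x ⟨hx1, hx2⟩; exact ⟨by simp [hx1], by simp [hx2]⟩

lemma K_le_center : K ≤ Subgroup.center Heis := by
  rintro x ⟨hx1, hx2⟩
  rw [Subgroup.mem_center_iff]
  intro y
  ext
  · simp; ring
  · simp; ring
  · simp [hx1, hx2]; ring

lemma lcs_two : (⊤ : Subgroup Heis).lowerCentralSeries 2 = ⊥ := by
  apply lowerCentralSeries_succ_eq_bot
  have h1 : (⊤ : Subgroup Heis).lowerCentralSeries 1 ≤ K := by
    rw [lowerCentralSeries_one, commutator_def, Subgroup.commutator_le]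
    intro g _ h _
    exact ⟨commutator_a g h, commutator_b g h⟩
  exact h1.trans K_le_center

/-- projection to the `a`-coordinate as a hom. -/
def pa : Heis →* Multiplicative ℤ where
  toFun x := Multiplicative.ofAdd x.a
  map_one' := rfl
  map_mul' x y := rfl

/-- projection to the `b`-coordinate as a hom. -/
def pb : Heis →* Multiplicative ℤ where
  toFun x := Multiplicative.ofAdd x.b
  map_one' := rfl
  map_mul' x y := rfl

end Heis

/-- If `g₁, …, g_h` generate the free group `F` of rank `h ≥ 2`, then the
commutator `⁅g₁, g₂⁆` does not lie in the third term `[[F,F],F]` of the lower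
central series of `F`; equivalently its image in `[F,F]/[[F,F],F]` is
nontrivial. -/
theorem commutator_of_generators_not_in_lcs_two (h : ℕ) (hh : 2 ≤ h)
    (gs : Fin h → FreeGroup (Fin h))
    (hgen : Subgroup.closure (Set.range gs) = ⊤) :
    ⁅gs ⟨0, by omega⟩, gs ⟨1, by omega⟩⁆ ∉ (⊤ : Subgroup (FreeGroup (Fin h))).lowerCentralSeries 2 := by
  set π : FreeGroup (Fin h) →* Multiplicative (Fin h → ℤ) :=
    FreeGroup.lift (fun i => Multiplicative.ofAdd (Pi.single i 1 : Fin h → ℤ)) with hπ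
  set v : Fin h → (Fin h → ℤ) := fun i => Multiplicative.toAdd (π (gs i)) with hv
  set N : Submodule ℤ (Fin h → ℤ) := Submodule.span ℤ (Set.range v) with hN
  -- every π-image lies in the span of the v's
  have hwT : ∀ u : FreeGroup (Fin h), Multiplicative.toAdd (π u) ∈ N := by
    let S : Subgroup (FreeGroup (Fin h)) :=
      { carrier := {u | Multiplicative.toAdd (π u) ∈ N}
        one_mem' := by
          show Multiplicative.toAdd (π 1) ∈ N
          rw [map_one]; exact N.zero_mem
        mul_mem' := by
          intro x y hx hy
          show Multiplicative.toAdd (π (x * y)) ∈ N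
          rw [map_mul, toAdd_mul]
          exact N.add_mem hx hy
        inv_mem' := by
          intro x hx
          show Multiplicative.toAdd (π x⁻¹) ∈ N
          rw [map_inv, toAdd_inv]
          exact N.neg_mem hx }
    intro u
    have hle : Subgroup.closure (Set.range gs) ≤ S := by
      rw [Subgroup.closure_le]
      rintro x ⟨i, rfl⟩
      exact Submodule.subset_span ⟨i, rfl⟩
    rw [hgen] at hle
    exact hle (Subgroup.mem_top u)
  -- π is surjective
  have hsum : ∀ m : Fin h → ℤ, ∑ i, (m i) • (Pi.single i 1 : Fin h → ℤ) = m := by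
    intro m
    ext j
    rw [Finset.sum_apply]
    simp [Pi.single_apply]
  have hsurj : Function.Surjective π := by
    intro m
    have hm : m = ∏ i, (Multiplicative.ofAdd (Pi.single i 1 : Fin h → ℤ)) ^
        ((Multiplicative.toAdd m) i) := by
      apply Multiplicative.toAdd.injective
      rw [toAdd_prod]
      simp only [toAdd_zpow, toAdd_ofAdd]
      exact (hsum (Multiplicative.toAdd m)).symm
    have : m ∈ π.range := by
      rw [hm]
      refine Subgroup.prod_mem _ (fun i _ => Subgroup.zpow_mem _ ?_ _)
      exact ⟨FreeGroup.of i, by simp [hπ, FreeGroup.lift_apply_of]⟩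
    exact this
  have hNtop : N = ⊤ := by
    rw [Submodule.eq_top_iff']
    intro m
    obtain ⟨w, hw⟩ := hsurj (Multiplicative.ofAdd m)
    have := hwT w
    rwa [hw, toAdd_ofAdd] at this
  -- dual functionals
  set bs : Module.Basis (Fin h) ℤ (Fin h → ℤ) := Pi.basisFun ℤ (Fin h) with hbs
  set f : (Fin h → ℤ) →ₗ[ℤ] (Fin h → ℤ) := bs.constr ℤ v with hf
  have hfs : Function.Surjective f := by
    rw [← LinearMap.range_eq_top, Module.Basis.constr_range]
    exact hNtop
  have hfb : Function.Bijective f :=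
    ⟨OrzechProperty.injective_of_surjective_endomorphism f hfs, hfs⟩
  set ψ : (Fin h → ℤ) →ₗ[ℤ] (Fin h → ℤ) := (LinearEquiv.ofBijective f hfb).symm.toLinearMap
    with hψ
  have hψv : ∀ i, ψ (v i) = Pi.single i 1 := by
    intro i
    have h1 : f ((Pi.single i 1 : Fin h → ℤ)) = v i := by
      have h2 := bs.constr_basis ℤ v i
      rwa [hbs, Pi.basisFun_apply] at h2
    rw [← h1]
    exact (LinearEquiv.ofBijective f hfb).symm_apply_apply _
  set i0 : Fin h := ⟨0, by omega⟩ with hi0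
  set i1 : Fin h := ⟨1, by omega⟩ with hi1
  set α : (Fin h → ℤ) →ₗ[ℤ] ℤ := (LinearMap.proj i0).comp ψ with hα
  set β : (Fin h → ℤ) →ₗ[ℤ] ℤ := (LinearMap.proj i1).comp ψ with hβ
  have hα' : ∀ x, α x = ψ x i0 := fun x => rfl
  have hβ' : ∀ x, β x = ψ x i1 := fun x => rfl
  set φ : FreeGroup (Fin h) →* Heis := FreeGroup.lift
    (fun i => (⟨α (Pi.single i 1), β (Pi.single i 1), 0⟩ : Heis)) with hφ
  have hpa : ∀ w, (φ w).a = α (Multiplicative.toAdd (π w)) := by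
    have key : Heis.pa.comp φ =
        (AddMonoidHom.toMultiplicative (α.toAddMonoidHom)).comp π := by
      apply FreeGroup.ext_hom
      intro i
      simp [hφ, hπ, Heis.pa, FreeGroup.lift_apply_of]
    intro w
    have h3 := DFunLike.congr_fun key w
    simpa [Heis.pa] using h3
  have hpb : ∀ w, (φ w).b = β (Multiplicative.toAdd (π w)) := by
    have key : Heis.pb.comp φ =
        (AddMonoidHom.toMultiplicative (β.toAddMonoidHom)).comp π := by
      apply FreeGroup.ext_hom
      intro i
      simp [hφ, hπ, Heis.pb, FreeGroup.lift_apply_of]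
    intro w
    have h3 := DFunLike.congr_fun key w
    simpa [Heis.pb] using h3
  have hne : i0 ≠ i1 := by
    simp [hi0, hi1, Fin.ext_iff]
  have htov : ∀ i, Multiplicative.toAdd (π (gs i)) = v i := fun i => rfl
  have ha0 : (φ (gs i0)).a = 1 := by
    rw [hpa, htov, hα', hψv i0, Pi.single_eq_same]
  have ha1 : (φ (gs i1)).a = 0 := by
    rw [hpa, htov, hα', hψv i1, Pi.single_eq_of_ne hne]
  have hb0 : (φ (gs i0)).b = 0 := by
    rw [hpb, htov, hβ', hψv i0, Pi.single_eq_of_ne hne.symm]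
  have hb1 : (φ (gs i1)).b = 1 := by
    rw [hpb, htov, hβ', hψv i1, Pi.single_eq_same]
  intro hmem
  have h2 : φ ⁅gs i0, gs i1⁆ ∈ (⊤ : Subgroup Heis).lowerCentralSeries 2 :=
    lowerCentralSeries.map φ 2 ⟨_, hmem, rfl⟩
  rw [Heis.lcs_two, Subgroup.mem_bot, map_commutatorElement] at h2
  have hc := congrArg Heis.c h2
  rw [Heis.commutator_c, ha0, ha1, hb0, hb1] at hc
  simp at hc
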